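/- Let N ≥ 1, let θ_1,…,θ_N, φ_1,…,φ_N ∈ ℝ, let A = ⊗_{l=1}^N A(θ_l, φ_l) and B = σ_Z^{⊗N}, and let M = {m ∈ {0,1}^N : sin((Σ_{l=1}^N (−1)^{m_l} θ_l)/2) = 0}. Then every vector ψ ∈ ℂ^{2^N} with Aψ = ψ and Bψ = ψ lies in the linear span of the vectors G_m := Σ_{j ∈ S_0} (∏_{l=1}^N (i·e^{iφ_l}·(−1)^{m_l})^{j_l}) |j⟩ for m ∈ M, where i is the imaginary unit. -/

import Mathlib

open Matrix Finset

/-- Tensor product of `N` 2×2 complex matrices, indexed by bit strings. -/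
noncomputable def tensorN {N : ℕ} (M : Fin N → Matrix (Fin 2) (Fin 2) ℂ) :
    Matrix (Fin N → Fin 2) (Fin N → Fin 2) ℂ :=
  fun i j => ∏ l, M l (i l) (j l)

/-- The spin observable `A(θ,φ)`. -/
noncomputable def spinA (θ φ : ℝ) : Matrix (Fin 2) (Fin 2) ℂ :=
  !![(Real.cos θ : ℂ), Complex.exp (-(φ : ℂ) * Complex.I) * (Real.sin θ : ℂ);
     Complex.exp ((φ : ℂ) * Complex.I) * (Real.sin θ : ℂ), -(Real.cos θ : ℂ)]

/-- The Pauli matrix `σ_Z`. -/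
def sigmaZ : Matrix (Fin 2) (Fin 2) ℂ := !![1, 0; 0, -1]

/-- The vector `G_m = Σ_{j ∈ S_0} (∏_l (i e^{iφ_l} (−1)^{m_l})^{j_l}) |j⟩`. -/
noncomputable def Gvec (N : ℕ) (φ : Fin N → ℝ) (m : Fin N → Fin 2) :
    (Fin N → Fin 2) → ℂ :=
  fun j => if Even (∑ l, (j l : ℕ)) then
    ∏ l, (Complex.I * Complex.exp ((φ l : ℂ) * Complex.I) * (-1 : ℂ) ^ (m l : ℕ)) ^ (j l : ℕ)
  else 0

section Aux

open Complex

/- ### basic tensor product lemmas -/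

lemma tensorN_mul {N : ℕ} (M M' : Fin N → Matrix (Fin 2) (Fin 2) ℂ) :
    tensorN M * tensorN M' = tensorN (fun l => M l * M' l) := by
  ext i k
  simp only [tensorN, Matrix.mul_apply, ← Finset.prod_mul_distrib]
  rw [← Fintype.prod_sum (fun l b => M l (i l) b * M' l b (k l))]

lemma tensorN_one {N : ℕ} : tensorN (fun _ : Fin N => (1 : Matrix (Fin 2) (Fin 2) ℂ)) = 1 := by
  ext i j
  simp only [tensorN, Matrix.one_apply]
  rw [Fintype.prod_boole]
  simp [funext_iff]

/- ### site matrices -/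

/-- columns are the eigenvectors of `spinA` -/
noncomputable def Ut (φ : ℝ) : Matrix (Fin 2) (Fin 2) ℂ :=
  !![1, 1;
     Complex.I * Complex.exp ((φ:ℂ) * Complex.I), -(Complex.I * Complex.exp ((φ:ℂ) * Complex.I))]

noncomputable def Utinv (φ : ℝ) : Matrix (Fin 2) (Fin 2) ℂ :=
  !![1/2, -Complex.I * Complex.exp (-(φ:ℂ) * Complex.I) / 2;
     1/2,  Complex.I * Complex.exp (-(φ:ℂ) * Complex.I) / 2]

noncomputable def Kmat (θ : ℝ) : Matrix (Fin 2) (Fin 2) ℂ :=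
  !![0, Complex.exp (-(θ:ℂ) * Complex.I); Complex.exp ((θ:ℂ) * Complex.I), 0]

def Xmat : Matrix (Fin 2) (Fin 2) ℂ := !![0, 1; 1, 0]

lemma Ut_mul_Utinv (φ : ℝ) : Ut φ * Utinv φ = 1 := by
  have hI : (Complex.I)^2 = -1 := Complex.I_sq
  have hph : cexp (-((φ:ℂ) * Complex.I)) * cexp ((φ:ℂ) * Complex.I) = 1 := by
    rw [← Complex.exp_add]; simp
  ext i j
  fin_cases i <;> fin_cases j <;>
    simp [Ut, Utinv, Matrix.mul_apply, Fin.sum_univ_two, Matrix.one_apply]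
  all_goals first
    | ring1
    | linear_combination hph - cexp ((φ:ℂ)*Complex.I) * cexp (-((φ:ℂ)*Complex.I)) * hI
    | linear_combination hph/2 - (cexp ((φ:ℂ)*Complex.I) * cexp (-((φ:ℂ)*Complex.I))/2) * hI
    | linear_combination -hph/2 + (cexp ((φ:ℂ)*Complex.I) * cexp (-((φ:ℂ)*Complex.I))/2) * hI
    | linear_combination -hph + cexp ((φ:ℂ)*Complex.I) * cexp (-((φ:ℂ)*Complex.I)) * hI

lemma Utinv_mul_Ut (φ : ℝ) : Utinv φ * Ut φ = 1 := by
  have hI : (Complex.I)^2 = -1 := Complex.I_sq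
  have hph : cexp (-((φ:ℂ) * Complex.I)) * cexp ((φ:ℂ) * Complex.I) = 1 := by
    rw [← Complex.exp_add]; simp
  ext i j
  fin_cases i <;> fin_cases j <;>
    simp [Ut, Utinv, Matrix.mul_apply, Fin.sum_univ_two, Matrix.one_apply]
  all_goals first
    | ring1
    | linear_combination hph - cexp ((φ:ℂ)*Complex.I) * cexp (-((φ:ℂ)*Complex.I)) * hI
    | linear_combination hph/2 - (cexp ((φ:ℂ)*Complex.I) * cexp (-((φ:ℂ)*Complex.I))/2) * hI
    | linear_combination -hph/2 + (cexp ((φ:ℂ)*Complex.I) * cexp (-((φ:ℂ)*Complex.I))/2) * hI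
    | linear_combination -hph + cexp ((φ:ℂ)*Complex.I) * cexp (-((φ:ℂ)*Complex.I)) * hI

lemma spinA_mul_Ut (θ φ : ℝ) : spinA θ φ * Ut φ = Ut φ * Kmat θ := by
  have hth : cexp ((θ:ℂ) * Complex.I) = Complex.cos θ + Complex.sin θ * Complex.I :=
    Complex.exp_mul_I θ
  have hth' : cexp (-((θ:ℂ) * Complex.I)) = Complex.cos θ - Complex.sin θ * Complex.I := by
    rw [← neg_mul, Complex.exp_mul_I, Complex.cos_neg, Complex.sin_neg]; ring
  have hI : (Complex.I)^2 = -1 := Complex.I_sq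
  have hph : cexp (-((φ:ℂ) * Complex.I)) * cexp ((φ:ℂ) * Complex.I) = 1 := by
    rw [← Complex.exp_add]; simp
  ext i j
  fin_cases i <;> fin_cases j <;>
    simp [spinA, Ut, Kmat, Matrix.mul_apply, Fin.sum_univ_two]
  · linear_combination (Complex.sin (θ:ℂ) * Complex.I) * hph - hth
  · linear_combination (-(Complex.sin (θ:ℂ) * Complex.I)) * hph - hth'
  · linear_combination Complex.I * cexp ((φ:ℂ) * Complex.I) * hth + cexp ((φ:ℂ) * Complex.I) * Complex.sin (θ:ℂ) * hI
  · linear_combination (-(Complex.I * cexp ((φ:ℂ) * Complex.I))) * hth' + cexp ((φ:ℂ) * Complex.I) * Complex.sin (θ:ℂ) * hI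

lemma sigmaZ_mul_Ut (φ : ℝ) : sigmaZ * Ut φ = Ut φ * Xmat := by
  ext i j
  fin_cases i <;> fin_cases j <;>
    simp [sigmaZ, Ut, Xmat, Matrix.mul_apply, Fin.sum_univ_two]

/- ### entry formulas -/

def flipv {N : ℕ} (m : Fin N → Fin 2) : Fin N → Fin 2 := fun l => m l + 1

lemma flipv_flipv {N : ℕ} (m : Fin N → Fin 2) : flipv (flipv m) = m := by
  funext l
  have : ∀ b : Fin 2, b + 1 + 1 = b := by decide
  exact this (m l)

lemma Ut_apply (φ : ℝ) (b' b : Fin 2) :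
    Ut φ b' b = (Complex.I * cexp ((φ:ℂ) * Complex.I) * (-1:ℂ) ^ (b:ℕ)) ^ (b':ℕ) := by
  fin_cases b' <;> fin_cases b <;> simp [Ut] <;> ring

lemma Kmat_apply (θ : ℝ) (b b' : Fin 2) :
    Kmat θ b b' = if b' = b + 1 then cexp ((-1:ℂ) ^ (b':ℕ) * (θ:ℂ) * Complex.I) else 0 := by
  fin_cases b <;> fin_cases b' <;> simp [Kmat] <;> ring_nf

lemma Xmat_apply (b b' : Fin 2) :
    Xmat b b' = if b' = b + 1 then 1 else 0 := by
  fin_cases b <;> fin_cases b' <;> simp [Xmat]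

lemma tensorK_apply {N : ℕ} (θ : Fin N → ℝ) (m m' : Fin N → Fin 2) :
    tensorN (fun l => Kmat (θ l)) m m'
      = if m' = flipv m then cexp (∑ l, (-1:ℂ) ^ ((m' l : ℕ)) * (θ l : ℂ) * Complex.I) else 0 := by
  simp only [tensorN]
  rw [Finset.prod_congr rfl (fun l _ => Kmat_apply (θ l) (m l) (m' l)), Fintype.prod_ite_zero]
  by_cases h : m' = flipv m
  · rw [if_pos, if_pos h, Complex.exp_sum]
    intro l; exact congrFun h l
  · rw [if_neg, if_neg h]
    intro hall; exact h (funext hall)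

lemma tensorX_apply {N : ℕ} (m m' : Fin N → Fin 2) :
    tensorN (fun _ => Xmat) m m' = if m' = flipv m then 1 else 0 := by
  simp only [tensorN]
  rw [Finset.prod_congr rfl (fun l _ => Xmat_apply (m l) (m' l)), Fintype.prod_ite_zero]
  by_cases h : m' = flipv m
  · rw [if_pos, if_pos h, Finset.prod_const_one]
    intro l; exact congrFun h l
  · rw [if_neg, if_neg h]
    intro hall; exact h (funext hall)

lemma tensorUt_apply {N : ℕ} (φ : Fin N → ℝ) (j m : Fin N → Fin 2) :
    tensorN (fun l => Ut (φ l)) j m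
      = ∏ l, (Complex.I * cexp ((φ l : ℂ) * Complex.I) * (-1:ℂ) ^ (m l : ℕ)) ^ (j l : ℕ) := by
  simp only [tensorN]
  exact Finset.prod_congr rfl (fun l _ => Ut_apply (φ l) (j l) (m l))

lemma tensorUt_flip {N : ℕ} (φ : Fin N → ℝ) (j m : Fin N → Fin 2) :
    tensorN (fun l => Ut (φ l)) j (flipv m)
      = (-1:ℂ) ^ (∑ l, (j l : ℕ)) * tensorN (fun l => Ut (φ l)) j m := by
  rw [tensorUt_apply, tensorUt_apply, ← Finset.prod_pow_eq_pow_sum, ← Finset.prod_mul_distrib]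
  refine Finset.prod_congr rfl (fun l _ => ?_)
  have hb : ((-1:ℂ) ^ ((flipv m l : Fin 2) : ℕ)) = -((-1:ℂ) ^ ((m l : Fin 2) : ℕ)) := by
    have : ∀ b : Fin 2, ((-1:ℂ) ^ (((b+1 : Fin 2)) : ℕ)) = -((-1:ℂ) ^ ((b : Fin 2) : ℕ)) := by
      intro b; fin_cases b <;> norm_num [show ((2:Fin 2):ℕ) = 0 from rfl, show ((1 + 1 : Fin 2) : ℕ) = 0 from rfl]
    exact this (m l)
  rw [show flipv m l = m l + 1 from rfl] at hb ⊢
  rw [hb, ← mul_pow]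
  ring_nf

end Aux

theorem stmt3 (N : ℕ) (hN : 1 ≤ N) (θ φ : Fin N → ℝ) (ψ : (Fin N → Fin 2) → ℂ)
    (hA : (tensorN (fun l => spinA (θ l) (φ l))).mulVec ψ = ψ)
    (hB : (tensorN (fun _ => sigmaZ)).mulVec ψ = ψ) :
    ψ ∈ Submodule.span ℂ
      (Gvec N φ '' {m : Fin N → Fin 2 |
        Real.sin ((∑ l, (-1 : ℝ) ^ (m l : ℕ) * θ l) / 2) = 0}) := by
  classical
  obtain ⟨V, Vinv, hVV, hVV', hAV, hBV, hVapp, hVflip⟩ :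
      ∃ V Vinv : Matrix (Fin N → Fin 2) (Fin N → Fin 2) ℂ,
        V * Vinv = 1 ∧ Vinv * V = 1 ∧
        tensorN (fun l => spinA (θ l) (φ l)) * V = V * tensorN (fun l => Kmat (θ l)) ∧
        tensorN (fun _ : Fin N => sigmaZ) * V = V * tensorN (fun _ => Xmat) ∧
        (∀ j m, V j m
          = ∏ l, (Complex.I * Complex.exp ((φ l : ℂ) * Complex.I) * (-1:ℂ) ^ (m l : ℕ))
              ^ (j l : ℕ)) ∧
        (∀ j m, V j (flipv m) = (-1:ℂ) ^ (∑ l, (j l : ℕ)) * V j m) := by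
    refine ⟨tensorN (fun l => Ut (φ l)), tensorN (fun l => Utinv (φ l)), ?_, ?_, ?_, ?_, ?_, ?_⟩
    · rw [tensorN_mul,
        show (fun l => Ut (φ l) * Utinv (φ l)) = fun _ : Fin N => (1 : Matrix (Fin 2) (Fin 2) ℂ)
          from funext fun l => Ut_mul_Utinv (φ l)]
      exact tensorN_one
    · rw [tensorN_mul,
        show (fun l => Utinv (φ l) * Ut (φ l)) = fun _ : Fin N => (1 : Matrix (Fin 2) (Fin 2) ℂ)
          from funext fun l => Utinv_mul_Ut (φ l)]
      exact tensorN_one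
    · rw [tensorN_mul, tensorN_mul]
      exact congrArg tensorN (funext fun l => spinA_mul_Ut (θ l) (φ l))
    · rw [tensorN_mul, tensorN_mul]
      exact congrArg tensorN (funext fun l => sigmaZ_mul_Ut (φ l))
    · exact fun j m => tensorUt_apply φ j m
    · exact fun j m => tensorUt_flip φ j m
  obtain ⟨d, hψd⟩ : ∃ d, V.mulVec d = ψ :=
    ⟨Vinv.mulVec ψ, by rw [Matrix.mulVec_mulVec, hVV, Matrix.one_mulVec]⟩
  have cancelV : ∀ x y : (Fin N → Fin 2) → ℂ, V.mulVec x = V.mulVec y → x = y := by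
    intro x y hxy
    calc x = (Vinv * V).mulVec x := by rw [hVV', Matrix.one_mulVec]
      _ = Vinv.mulVec (V.mulVec x) := (Matrix.mulVec_mulVec x Vinv V).symm
      _ = Vinv.mulVec (V.mulVec y) := by rw [hxy]
      _ = (Vinv * V).mulVec y := Matrix.mulVec_mulVec y Vinv V
      _ = y := by rw [hVV', Matrix.one_mulVec]
  have h1 : (tensorN (fun l => Kmat (θ l))).mulVec d = d := by
    refine cancelV _ _ ?_
    calc V.mulVec ((tensorN (fun l => Kmat (θ l))).mulVec d)
        = (V * tensorN (fun l => Kmat (θ l))).mulVec d := Matrix.mulVec_mulVec d V _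
      _ = (tensorN (fun l => spinA (θ l) (φ l)) * V).mulVec d := by rw [hAV]
      _ = (tensorN (fun l => spinA (θ l) (φ l))).mulVec (V.mulVec d) :=
          (Matrix.mulVec_mulVec d _ V).symm
      _ = ψ := by rw [hψd, hA]
      _ = V.mulVec d := hψd.symm
  have h2 : (tensorN (fun _ : Fin N => Xmat)).mulVec d = d := by
    refine cancelV _ _ ?_
    calc V.mulVec ((tensorN (fun _ : Fin N => Xmat)).mulVec d)
        = (V * tensorN (fun _ : Fin N => Xmat)).mulVec d := Matrix.mulVec_mulVec d V _
      _ = (tensorN (fun _ : Fin N => sigmaZ) * V).mulVec d := by rw [hBV]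
      _ = (tensorN (fun _ : Fin N => sigmaZ)).mulVec (V.mulVec d) :=
          (Matrix.mulVec_mulVec d _ V).symm
      _ = ψ := by rw [hψd, hB]
      _ = V.mulVec d := hψd.symm
  -- pointwise versions
  have h1' : ∀ m, Complex.exp (∑ l, (-1:ℂ) ^ ((flipv m l : Fin 2) : ℕ) * (θ l : ℂ) * Complex.I)
      * d (flipv m) = d m := by
    intro m
    have hh := congrFun h1 m
    rw [Matrix.mulVec,
      show (tensorN (fun l => Kmat (θ l)) m ⬝ᵥ d)
        = ∑ m', tensorN (fun l => Kmat (θ l)) m m' * d m' from rfl,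
      Finset.sum_congr rfl (fun m' _ => by rw [tensorK_apply])] at hh
    simpa [Finset.sum_ite_eq', ite_mul] using hh
  have h2' : ∀ m, d (flipv m) = d m := by
    intro m
    have hh := congrFun h2 m
    rw [Matrix.mulVec,
      show (tensorN (fun _ : Fin N => Xmat) m ⬝ᵥ d)
        = ∑ m', tensorN (fun _ : Fin N => Xmat) m m' * d m' from rfl,
      Finset.sum_congr rfl (fun m' _ => by rw [tensorX_apply])] at hh
    simpa [Finset.sum_ite_eq', ite_mul] using hh
  -- support of d is contained in M
  have key : ∀ m, d m ≠ 0 → Real.sin ((∑ l, (-1 : ℝ) ^ (m l : ℕ) * θ l) / 2) = 0 := by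
    intro m hm
    have h3 := h1' (flipv m)
    rw [flipv_flipv, h2' m] at h3
    have hexp : Complex.exp ((((∑ l, (-1 : ℝ) ^ (m l : ℕ) * θ l) : ℝ) : ℂ) * Complex.I) = 1 := by
      have hone : Complex.exp (∑ l, (-1:ℂ) ^ ((m l : Fin 2) : ℕ) * (θ l : ℂ) * Complex.I) = 1 :=
        mul_right_cancel₀ hm (h3.trans (one_mul (d m)).symm)
      rw [← hone]
      congr 1
      push_cast
      rw [Finset.sum_mul]
    rw [Complex.exp_eq_one_iff] at hexp
    obtain ⟨n, hn⟩ := hexp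
    have hr : (∑ l, (-1 : ℝ) ^ (m l : ℕ) * θ l) = n * (2 * Real.pi) := by
      have := mul_right_cancel₀ Complex.I_ne_zero
        (hn.trans (by push_cast; ring :
          (n : ℂ) * (2 * Real.pi * Complex.I) = (((n : ℝ) * (2 * Real.pi) : ℝ) : ℂ) * Complex.I))
      exact_mod_cast this
    rw [hr, show ((n : ℝ) * (2 * Real.pi)) / 2 = (n : ℝ) * Real.pi by ring]
    exact Real.sin_int_mul_pi n
  -- decomposition of ψ
  have hpsi : ψ = ∑ m, d m • Gvec N φ m := by
    funext j
    rw [← hψd,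
      show (V.mulVec d) j = ∑ m, V j m * d m from rfl,
      show (∑ m, d m • Gvec N φ m) j = ∑ m, d m * Gvec N φ m j by simp [Finset.sum_apply]]
    by_cases hj : Even (∑ l, (j l : ℕ))
    · refine Finset.sum_congr rfl (fun m _ => ?_)
      rw [Gvec, if_pos hj, hVapp]
      ring
    · have hGz : ∀ m, Gvec N φ m j = 0 := fun m => by rw [Gvec]; exact if_neg hj
      simp only [hGz, mul_zero, Finset.sum_const_zero]
      have hflip : Function.Bijective (flipv : (Fin N → Fin 2) → (Fin N → Fin 2)) :=
        Function.Involutive.bijective flipv_flipv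
      have hre : (∑ m, V j m * d m) = ∑ m, V j (flipv m) * d (flipv m) :=
        Fintype.sum_bijective flipv hflip _ _ (fun m => by rw [flipv_flipv])
      have hneg : (∑ m, V j (flipv m) * d (flipv m)) = -∑ m, V j m * d m := by
        rw [← Finset.sum_neg_distrib]
        refine Finset.sum_congr rfl (fun m _ => ?_)
        rw [h2' m, hVflip, Odd.neg_one_pow (Nat.not_even_iff_odd.mp hj)]
        ring
      have h2S : (2:ℂ) * (∑ m, V j m * d m) = 0 := by
        linear_combination hre.trans hneg
      rcases mul_eq_zero.mp h2S with h | h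
      · exact absurd h two_ne_zero
      · exact h
  rw [hpsi]
  refine Submodule.sum_mem _ (fun m _ => ?_)
  by_cases hm : d m = 0
  · simp [hm]
  · exact Submodule.smul_mem _ _ (Submodule.subset_span ⟨m, key m hm, rfl⟩)
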